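/- Let e₀,…,e₆ be a basis of ℂ⁷ with dual basis v₀,…,v₆, let B be the symmetric bilinear form with B(e₀,e₀) = 1, B(e₁,e₂) = B(e₃,e₄) = B(e₅,e₆) = 1/2 and all other pairings of basis vectors zero (the polar form of Q = v₀² + v₁v₂ + v₃v₄ + v₅v₆), and let ω = v₀∧v₁∧v₂ + v₀∧v₃∧v₄ + v₀∧v₅∧v₆ + v₁∧v₃∧v₅ + v₂∧v₄∧v₆. Call a 2-dimensional subspace P ⊂ ℂ⁷ isotropic if B vanishes identically on P, and a null-plane if moreover ω(u, v, z) = 0 for all u, v ∈ P and z ∈ ℂ⁷. Let D be the diagonal endomorphism with D e₀ = 0, D e₁ = s·e₁, D e₂ = −s·e₂, D e₃ = t·e₃, D e₄ = −t·e₄, D e₅ = −(s+t)·e₅, D e₆ = (s+t)·e₆, where s, t ∈ ℂ satisfy s, t, s+t, s−t, 2s+t, s+2t all nonzero. Then there are exactly 12 isotropic planes P with D(P) ⊆ P, and exactly 6 of them are null-planes. -/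

import Mathlib

/-- The polar bilinear form of `Q = v₀² + v₁v₂ + v₃v₄ + v₅v₆` on `ℂ⁷`:
`B(e₀,e₀) = 1`, `B(e₁,e₂) = B(e₃,e₄) = B(e₅,e₆) = 1/2`, all other pairings zero. -/
noncomputable def polarB (x y : Fin 7 → ℂ) : ℂ :=
  x 0 * y 0 + (1 / 2) * (x 1 * y 2 + x 2 * y 1 + x 3 * y 4 + x 4 * y 3 +
    x 5 * y 6 + x 6 * y 5)

/-- The evaluation of the decomposable 3-form `v_i∧v_j∧v_k` on `(x, y, z)`. -/
def wedge3 (i j k : Fin 7) (x y z : Fin 7 → ℂ) : ℂ :=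
  Matrix.det !![x i, x j, x k; y i, y j, y k; z i, z j, z k]

/-- The three-form `ω = v₀∧v₁∧v₂ + v₀∧v₃∧v₄ + v₀∧v₅∧v₆ + v₁∧v₃∧v₅ + v₂∧v₄∧v₆`. -/
def omega7 (x y z : Fin 7 → ℂ) : ℂ :=
  wedge3 0 1 2 x y z + wedge3 0 3 4 x y z + wedge3 0 5 6 x y z +
    wedge3 1 3 5 x y z + wedge3 2 4 6 x y z

open Submodule Finset Module

def Ee (i : Fin 7) : Fin 7 → ℂ := Pi.single i 1

lemma vec7_5 (a b c d e f g : ℂ) : ![a,b,c,d,e,f,g] 5 = f := rfl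
lemma vec7_6 (a b c d e f g : ℂ) : ![a,b,c,d,e,f,g] 6 = g := rfl

lemma key_single (d : Fin 7 → ℂ) (hd : Function.Injective d)
    (P : Submodule ℂ (Fin 7 → ℂ)) (hP : ∀ u ∈ P, (fun k => d k * u k) ∈ P)
    (u : Fin 7 → ℂ) (hu : u ∈ P) (i : Fin 7) : Pi.single i (u i) ∈ P := by
  classical
  have step : ∀ F : Finset (Fin 7), (fun k => (∏ j ∈ F, (d k - d j)) * u k) ∈ P := by
    intro F
    induction F using Finset.induction_on with
    | empty => simpa using hu
    | insert _ _ hnm ih =>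
      rename_i a F
      have h1 := hP _ ih
      have h2 := P.sub_mem h1 (P.smul_mem (d a) ih)
      have heq : (fun k => (∏ j ∈ insert a F, (d k - d j)) * u k)
          = (fun k => d k * ((∏ j ∈ F, (d k - d j)) * u k))
            - d a • (fun k => (∏ j ∈ F, (d k - d j)) * u k) := by
        funext k
        simp [Finset.prod_insert hnm, Pi.sub_apply, smul_eq_mul]
        ring
      rw [heq]; exact h2
  have hv := step (Finset.univ.erase i)
  have hc : (∏ j ∈ Finset.univ.erase i, (d i - d j)) ≠ 0 := by
    rw [Finset.prod_ne_zero_iff]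
    intro j hj
    exact sub_ne_zero.mpr fun h => (Finset.mem_erase.mp hj).1 (hd h).symm
  have heq : (fun k => (∏ j ∈ Finset.univ.erase i, (d k - d j)) * u k)
      = (∏ j ∈ Finset.univ.erase i, (d i - d j)) • (Pi.single i (u i) : Fin 7 → ℂ) := by
    funext k
    by_cases hk : k = i
    · subst hk; simp [Pi.single_apply]
    · have hmem : k ∈ Finset.univ.erase i := Finset.mem_erase.mpr ⟨hk, Finset.mem_univ _⟩
      rw [Finset.prod_eq_zero hmem (by ring)]
      simp [Pi.single_apply, hk]
  rw [heq] at hv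
  have := P.smul_mem (∏ j ∈ Finset.univ.erase i, (d i - d j))⁻¹ hv
  rwa [inv_smul_smul₀ hc] at this

lemma Ee_li : LinearIndependent ℂ Ee := by
  rw [Fintype.linearIndependent_iff]
  intro g hg i
  have := congrFun hg i
  simpa [Ee, Pi.single_apply, Finset.sum_apply] using this

lemma rank_lemma (S : Finset (Fin 7)) :
    Module.finrank ℂ ↥(span ℂ (Ee '' ↑S)) = S.card := by
  have hb : LinearIndependent ℂ (fun x : {x // x ∈ S} => Ee x.1) :=
    Ee_li.comp Subtype.val Subtype.val_injective
  have h := finrank_span_eq_card hb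
  rw [show (Set.range fun x : {x // x ∈ S} => Ee x.1) = Ee '' ↑S by
    rw [Set.image_eq_range]; rfl] at h
  simpa using h

lemma rank_pair {i j : Fin 7} (hij : i ≠ j) :
    Module.finrank ℂ ↥(span ℂ {Ee i, Ee j}) = 2 := by
  classical
  have h := rank_lemma {i, j}
  rw [Finset.coe_insert, Finset.coe_singleton, Set.image_insert_eq, Set.image_singleton] at h
  rw [h, Finset.card_insert_of_notMem (by simp [hij]), Finset.card_singleton]

lemma single_eq_smul (i : Fin 7) (c : ℂ) : (Pi.single i c : Fin 7 → ℂ) = c • Ee i := by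
  funext k
  by_cases hk : k = i <;> simp [Ee, Pi.single_apply, hk]

lemma structure_lemma (d : Fin 7 → ℂ) (hd : Function.Injective d)
    (P : Submodule ℂ (Fin 7 → ℂ)) (hP : ∀ u ∈ P, (fun k => d k * u k) ∈ P)
    (hr : Module.finrank ℂ P = 2) :
    ∃ i j : Fin 7, i ≠ j ∧ Ee i ∈ P ∧ Ee j ∈ P ∧ P = span ℂ {Ee i, Ee j} := by
  classical
  set S : Finset (Fin 7) := Finset.univ.filter (fun i => Ee i ∈ P) with hSdef
  have hspan : P = span ℂ (Ee '' ↑S) := by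
    apply le_antisymm
    · intro u hu
      have hsum : u = ∑ i, (Pi.single i (u i) : Fin 7 → ℂ) := (Finset.univ_sum_single u).symm
      rw [hsum]
      apply Submodule.sum_mem
      intro i _
      by_cases h : u i = 0
      · simp [h]
      · have hEi : Ee i ∈ P := by
          have h1 := key_single d hd P hP u hu i
          rw [single_eq_smul] at h1
          have := P.smul_mem (u i)⁻¹ h1
          rwa [inv_smul_smul₀ h] at this
        rw [single_eq_smul]
        exact Submodule.smul_mem _ _ (Submodule.subset_span ⟨i, by simp [hSdef, hEi], rfl⟩)
    · rw [Submodule.span_le]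
      rintro x ⟨i, hi, rfl⟩
      simp only [hSdef, Finset.coe_filter, Set.mem_setOf_eq] at hi
      exact hi.2
  have hcard : S.card = 2 := by
    have h := rank_lemma S
    rw [← hspan, hr] at h
    omega
  obtain ⟨i, j, hij, hS⟩ := Finset.card_eq_two.mp hcard
  have hiS : Ee i ∈ P := by
    have : i ∈ S := by rw [hS]; simp
    simpa [hSdef] using this
  have hjS : Ee j ∈ P := by
    have : j ∈ S := by rw [hS]; simp
    simpa [hSdef] using this
  refine ⟨i, j, hij, hiS, hjS, ?_⟩
  rw [hspan, hS]
  congr 1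
  simp [Set.image_insert_eq]

lemma polarB_lin (a b c e : ℂ) (x y x' y' : Fin 7 → ℂ) :
    polarB (a • x + b • y) (c • x' + e • y') =
      a * c * polarB x x' + a * e * polarB x y' + b * c * polarB y x' + b * e * polarB y y' := by
  simp only [polarB, Pi.add_apply, Pi.smul_apply, smul_eq_mul]
  ring

set_option maxHeartbeats 1000000 in
lemma omega7_span (a b c e : ℂ) (x y w : Fin 7 → ℂ) :
    omega7 (a • x + b • y) (c • x + e • y) w = (a * e - b * c) * omega7 x y w := by
  simp [omega7, wedge3, Matrix.det_fin_three]
  ring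

lemma mem_pair_left (i j : Fin 7) : Ee i ∈ span ℂ {Ee i, Ee j} :=
  subset_span (Set.mem_insert _ _)

lemma mem_pair_right (i j : Fin 7) : Ee j ∈ span ℂ {Ee i, Ee j} :=
  subset_span (Set.mem_insert_of_mem _ rfl)

lemma iso_span {i j : Fin 7} (h1 : polarB (Ee i) (Ee i) = 0) (h2 : polarB (Ee i) (Ee j) = 0)
    (h3 : polarB (Ee j) (Ee i) = 0) (h4 : polarB (Ee j) (Ee j) = 0) :
    ∀ u ∈ span ℂ {Ee i, Ee j}, ∀ v ∈ span ℂ {Ee i, Ee j}, polarB u v = 0 := by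
  intro u hu v hv
  obtain ⟨a, b, hab⟩ := Submodule.mem_span_pair.mp hu
  obtain ⟨c, e, hce⟩ := Submodule.mem_span_pair.mp hv
  rw [← hab, ← hce, polarB_lin, h1, h2, h3, h4]
  ring

lemma null_span {i j : Fin 7} (h : ∀ z, omega7 (Ee i) (Ee j) z = 0) :
    ∀ u ∈ span ℂ {Ee i, Ee j}, ∀ v ∈ span ℂ {Ee i, Ee j}, ∀ z, omega7 u v z = 0 := by
  intro u hu v hv z
  obtain ⟨a, b, hab⟩ := Submodule.mem_span_pair.mp hu
  obtain ⟨c, e, hce⟩ := Submodule.mem_span_pair.mp hv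
  rw [← hab, ← hce, omega7_span, h z, mul_zero]

lemma inv_span (d : Fin 7 → ℂ) (i j : Fin 7) :
    ∀ u ∈ span ℂ {Ee i, Ee j}, (fun k => d k * u k) ∈ span ℂ {Ee i, Ee j} := by
  intro u hu
  obtain ⟨a, b, hab⟩ := Submodule.mem_span_pair.mp hu
  have heq : (fun k => d k * u k) = (a * d i) • Ee i + (b * d j) • Ee j := by
    funext k
    rw [← hab]
    by_cases h1 : k = i <;> by_cases h2 : k = j
    · subst h1; subst h2
      simp [Ee, Pi.single_apply]; ring
    · subst h1
      simp [Ee, Pi.single_apply, h2]; ring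
    · subst h2
      simp [Ee, Pi.single_apply, h1]; ring
    · simp [Ee, Pi.single_apply, h1, h2]
  rw [heq]
  exact Submodule.add_mem _ (Submodule.smul_mem _ _ (mem_pair_left i j))
    (Submodule.smul_mem _ _ (mem_pair_right i j))

lemma Ee_mem_span_pair {i k l : Fin 7} (h : Ee i ∈ span ℂ {Ee k, Ee l}) : i = k ∨ i = l := by
  by_contra hc
  push_neg at hc
  obtain ⟨a, b, hab⟩ := Submodule.mem_span_pair.mp h
  have h2 := congrFun hab i
  simp [Ee, Pi.single_apply, hc.1, hc.2] at h2

def T12 : Finset (Fin 7 × Fin 7) :=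
  {(1,3),(1,4),(1,5),(1,6),(2,3),(2,4),(2,5),(2,6),(3,5),(3,6),(4,5),(4,6)}
def T6 : Finset (Fin 7 × Fin 7) := {(1,4),(1,6),(2,3),(2,5),(3,6),(4,5)}
def DP : Finset (Fin 7 × Fin 7) := {(1,2),(2,1),(3,4),(4,3),(5,6),(6,5)}
def TP : Finset (Fin 7 × Fin 7) :=
  {(1,3),(3,1),(1,5),(5,1),(3,5),(5,3),(2,4),(4,2),(2,6),(6,2),(4,6),(6,4)}

lemma classify12 : ∀ i j : Fin 7, i ≠ j → i ≠ 0 → j ≠ 0 → (i,j) ∉ DP →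
    ((i,j) ∈ T12 ∨ (j,i) ∈ T12) := by decide

lemma classify6 : ∀ i j : Fin 7, i ≠ j → i ≠ 0 → j ≠ 0 → (i,j) ∉ DP → (i,j) ∉ TP →
    ((i,j) ∈ T6 ∨ (j,i) ∈ T6) := by decide

lemma T12_lt : ∀ p ∈ T12, (p.1 : ℕ) < (p.2 : ℕ) := by decide
lemma T6_lt : ∀ p ∈ T6, (p.1 : ℕ) < (p.2 : ℕ) := by decide

set_option maxHeartbeats 1000000 in
lemma dinj (s t : ℂ) (hs : s ≠ 0) (ht : t ≠ 0) (hst : s + t ≠ 0)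
    (hst' : s - t ≠ 0) (h2st : 2 * s + t ≠ 0) (hs2t : s + 2 * t ≠ 0) :
    Function.Injective ![0, s, -s, t, -t, -(s + t), s + t] := by
  intro a b hab
  fin_cases a <;> fin_cases b <;>
    first
      | rfl
      | ((simp [vec7_5, vec7_6] at hab) <;>
          (exfalso; first
            | exact hs (by linear_combination hab)
            | exact hs (by linear_combination -hab)
            | exact hs (by linear_combination hab/2)
            | exact hs (by linear_combination -hab/2)
            | exact ht (by linear_combination hab)
            | exact ht (by linear_combination -hab)
            | exact ht (by linear_combination hab/2)
            | exact ht (by linear_combination -hab/2)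
            | exact hst (by linear_combination hab)
            | exact hst (by linear_combination -hab)
            | exact hst (by linear_combination hab/2)
            | exact hst (by linear_combination -hab/2)
            | exact hst' (by linear_combination hab)
            | exact hst' (by linear_combination -hab)
            | exact hst' (by linear_combination hab/2)
            | exact hst' (by linear_combination -hab/2)
            | exact h2st (by linear_combination hab)
            | exact h2st (by linear_combination -hab)
            | exact h2st (by linear_combination hab/2)
            | exact h2st (by linear_combination -hab/2)
            | exact hs2t (by linear_combination hab)
            | exact hs2t (by linear_combination -hab)
            | exact hs2t (by linear_combination hab/2)
            | exact hs2t (by linear_combination -hab/2)))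

lemma w13 : omega7 (Ee 1) (Ee 3) (Ee 5) ≠ 0 := by
  simp [omega7, wedge3, Matrix.det_fin_three, Ee, Pi.single_apply]

lemma w31 : omega7 (Ee 3) (Ee 1) (Ee 5) ≠ 0 := by
  simp [omega7, wedge3, Matrix.det_fin_three, Ee, Pi.single_apply]

lemma w15 : omega7 (Ee 1) (Ee 5) (Ee 3) ≠ 0 := by
  simp [omega7, wedge3, Matrix.det_fin_three, Ee, Pi.single_apply]

lemma w51 : omega7 (Ee 5) (Ee 1) (Ee 3) ≠ 0 := by
  simp [omega7, wedge3, Matrix.det_fin_three, Ee, Pi.single_apply]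

lemma w35 : omega7 (Ee 3) (Ee 5) (Ee 1) ≠ 0 := by
  simp [omega7, wedge3, Matrix.det_fin_three, Ee, Pi.single_apply]

lemma w53 : omega7 (Ee 5) (Ee 3) (Ee 1) ≠ 0 := by
  simp [omega7, wedge3, Matrix.det_fin_three, Ee, Pi.single_apply]

lemma w24 : omega7 (Ee 2) (Ee 4) (Ee 6) ≠ 0 := by
  simp [omega7, wedge3, Matrix.det_fin_three, Ee, Pi.single_apply]

lemma w42 : omega7 (Ee 4) (Ee 2) (Ee 6) ≠ 0 := by
  simp [omega7, wedge3, Matrix.det_fin_three, Ee, Pi.single_apply]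

lemma w26 : omega7 (Ee 2) (Ee 6) (Ee 4) ≠ 0 := by
  simp [omega7, wedge3, Matrix.det_fin_three, Ee, Pi.single_apply]

lemma w62 : omega7 (Ee 6) (Ee 2) (Ee 4) ≠ 0 := by
  simp [omega7, wedge3, Matrix.det_fin_three, Ee, Pi.single_apply]

lemma w46 : omega7 (Ee 4) (Ee 6) (Ee 2) ≠ 0 := by
  simp [omega7, wedge3, Matrix.det_fin_three, Ee, Pi.single_apply]

lemma w64 : omega7 (Ee 6) (Ee 4) (Ee 2) ≠ 0 := by
  simp [omega7, wedge3, Matrix.det_fin_three, Ee, Pi.single_apply]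

lemma n14 : ∀ z, omega7 (Ee 1) (Ee 4) z = 0 := by
  intro z
  simp [omega7, wedge3, Matrix.det_fin_three, Ee, Pi.single_apply]

lemma n16 : ∀ z, omega7 (Ee 1) (Ee 6) z = 0 := by
  intro z
  simp [omega7, wedge3, Matrix.det_fin_three, Ee, Pi.single_apply]

lemma n23 : ∀ z, omega7 (Ee 2) (Ee 3) z = 0 := by
  intro z
  simp [omega7, wedge3, Matrix.det_fin_three, Ee, Pi.single_apply]

lemma n25 : ∀ z, omega7 (Ee 2) (Ee 5) z = 0 := by
  intro z
  simp [omega7, wedge3, Matrix.det_fin_three, Ee, Pi.single_apply]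

lemma n36 : ∀ z, omega7 (Ee 3) (Ee 6) z = 0 := by
  intro z
  simp [omega7, wedge3, Matrix.det_fin_three, Ee, Pi.single_apply]

lemma n45 : ∀ z, omega7 (Ee 4) (Ee 5) z = 0 := by
  intro z
  simp [omega7, wedge3, Matrix.det_fin_three, Ee, Pi.single_apply]

lemma injOn_pairs (T : Finset (Fin 7 × Fin 7)) (hlt : ∀ p ∈ T, (p.1 : ℕ) < (p.2 : ℕ)) :
    Set.InjOn (fun p : Fin 7 × Fin 7 => span ℂ {Ee p.1, Ee p.2}) ↑T := by
  rintro ⟨i, j⟩ hp ⟨k, l⟩ hq h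
  simp only [Finset.mem_coe] at hp hq
  simp only at h
  have c1 : i = k ∨ i = l := Ee_mem_span_pair (h ▸ mem_pair_left i j)
  have c2 : j = k ∨ j = l := Ee_mem_span_pair (h ▸ mem_pair_right i j)
  have c3 : k = i ∨ k = j := Ee_mem_span_pair (h ▸ mem_pair_left k l)
  have c4 : l = i ∨ l = j := Ee_mem_span_pair (h ▸ mem_pair_right k l)
  have lt1 := hlt _ hp
  have lt2 := hlt _ hq
  simp only at lt1 lt2
  have c1' : (i : ℕ) = k ∨ (i : ℕ) = l := c1.imp (congrArg Fin.val) (congrArg Fin.val)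
  have c2' : (j : ℕ) = k ∨ (j : ℕ) = l := c2.imp (congrArg Fin.val) (congrArg Fin.val)
  have c3' : (k : ℕ) = i ∨ (k : ℕ) = j := c3.imp (congrArg Fin.val) (congrArg Fin.val)
  have c4' : (l : ℕ) = i ∨ (l : ℕ) = j := c4.imp (congrArg Fin.val) (congrArg Fin.val)
  have hik : (i : ℕ) = k ∧ (j : ℕ) = l := by
    rcases c1' with h1 | h1 <;> rcases c2' with h2 | h2 <;>
      rcases c3' with h3 | h3 <;> rcases c4' with h4 | h4 <;> omega
  have e1 : i = k := Fin.val_injective hik.1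
  have e2 : j = l := Fin.val_injective hik.2
  subst e1; subst e2; rfl

set_option maxHeartbeats 4000000 in
lemma part1 (s t : ℂ) (hs : s ≠ 0) (ht : t ≠ 0) (hst : s + t ≠ 0)
    (hst' : s - t ≠ 0) (h2st : 2 * s + t ≠ 0) (hs2t : s + 2 * t ≠ 0) :
    {P : Submodule ℂ (Fin 7 → ℂ) | Module.finrank ℂ P = 2 ∧
      (∀ u ∈ P, ∀ v ∈ P, polarB u v = 0) ∧
      (∀ u ∈ P, (fun i => ![0, s, -s, t, -t, -(s + t), s + t] i * u i) ∈ P)}.ncard = 12 := by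
  have hd : Function.Injective ![0, s, -s, t, -t, -(s + t), s + t] :=
    dinj s t hs ht hst hst' h2st hs2t
  set d : Fin 7 → ℂ := ![0, s, -s, t, -t, -(s + t), s + t] with hddef
  have hset : {P : Submodule ℂ (Fin 7 → ℂ) | Module.finrank ℂ P = 2 ∧
      (∀ u ∈ P, ∀ v ∈ P, polarB u v = 0) ∧
      (∀ u ∈ P, (fun i => d i * u i) ∈ P)} =
      (fun p : Fin 7 × Fin 7 => span ℂ {Ee p.1, Ee p.2}) '' ↑T12 := by
    ext P
    constructor
    · rintro ⟨hr, hB, hD⟩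
      obtain ⟨i, j, hij, hiP, hjP, hPs⟩ := structure_lemma d hd P hD hr
      have hi0 : i ≠ 0 := by
        rintro rfl
        have h0 := hB _ hiP _ hiP
        simp [polarB, Ee, Pi.single_apply] at h0
      have hj0 : j ≠ 0 := by
        rintro rfl
        have h0 := hB _ hjP _ hjP
        simp [polarB, Ee, Pi.single_apply] at h0
      have hDP : (i, j) ∉ DP := by
        intro hmem
        have hBij := hB _ hiP _ hjP
        fin_cases hmem <;> simp [polarB, Ee, Pi.single_apply] at hBij
      rcases classify12 i j hij hi0 hj0 hDP with h | h
      · exact ⟨(i, j), Finset.mem_coe.mpr h, hPs.symm⟩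
      · refine ⟨(j, i), Finset.mem_coe.mpr h, ?_⟩
        simp only
        rw [Set.pair_comm (Ee j) (Ee i)]
        exact hPs.symm
    · rintro ⟨p, hp, rfl⟩
      simp only [Finset.mem_coe] at hp
      fin_cases hp <;>
        exact ⟨rank_pair (by decide),
          iso_span (by simp [polarB, Ee, Pi.single_apply])
            (by simp [polarB, Ee, Pi.single_apply])
            (by simp [polarB, Ee, Pi.single_apply])
            (by simp [polarB, Ee, Pi.single_apply]),
          inv_span d _ _⟩
  rw [hset, Set.ncard_image_of_injOn (injOn_pairs T12 T12_lt), Set.ncard_coe_finset]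
  decide

set_option maxHeartbeats 4000000 in
lemma part2 (s t : ℂ) (hs : s ≠ 0) (ht : t ≠ 0) (hst : s + t ≠ 0)
    (hst' : s - t ≠ 0) (h2st : 2 * s + t ≠ 0) (hs2t : s + 2 * t ≠ 0) :
    {P : Submodule ℂ (Fin 7 → ℂ) | Module.finrank ℂ P = 2 ∧
      (∀ u ∈ P, ∀ v ∈ P, polarB u v = 0) ∧
      (∀ u ∈ P, ∀ v ∈ P, ∀ z : Fin 7 → ℂ, omega7 u v z = 0) ∧
      (∀ u ∈ P, (fun i => ![0, s, -s, t, -t, -(s + t), s + t] i * u i) ∈ P)}.ncard = 6 := by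
  have hd : Function.Injective ![0, s, -s, t, -t, -(s + t), s + t] :=
    dinj s t hs ht hst hst' h2st hs2t
  set d : Fin 7 → ℂ := ![0, s, -s, t, -t, -(s + t), s + t] with hddef
  have hset : {P : Submodule ℂ (Fin 7 → ℂ) | Module.finrank ℂ P = 2 ∧
      (∀ u ∈ P, ∀ v ∈ P, polarB u v = 0) ∧
      (∀ u ∈ P, ∀ v ∈ P, ∀ z : Fin 7 → ℂ, omega7 u v z = 0) ∧
      (∀ u ∈ P, (fun i => d i * u i) ∈ P)} =
      (fun p : Fin 7 × Fin 7 => span ℂ {Ee p.1, Ee p.2}) '' ↑T6 := by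
    ext P
    constructor
    · rintro ⟨hr, hB, hW, hD⟩
      obtain ⟨i, j, hij, hiP, hjP, hPs⟩ := structure_lemma d hd P hD hr
      have hi0 : i ≠ 0 := by
        rintro rfl
        have h0 := hB _ hiP _ hiP
        simp [polarB, Ee, Pi.single_apply] at h0
      have hj0 : j ≠ 0 := by
        rintro rfl
        have h0 := hB _ hjP _ hjP
        simp [polarB, Ee, Pi.single_apply] at h0
      have hDP : (i, j) ∉ DP := by
        intro hmem
        have hBij := hB _ hiP _ hjP
        fin_cases hmem <;> simp [polarB, Ee, Pi.single_apply] at hBij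
      have hTP : (i, j) ∉ TP := by
        intro hmem
        have hWij := hW _ hiP _ hjP
        fin_cases hmem
        · exact w13 (hWij (Ee 5))
        · exact w31 (hWij (Ee 5))
        · exact w15 (hWij (Ee 3))
        · exact w51 (hWij (Ee 3))
        · exact w35 (hWij (Ee 1))
        · exact w53 (hWij (Ee 1))
        · exact w24 (hWij (Ee 6))
        · exact w42 (hWij (Ee 6))
        · exact w26 (hWij (Ee 4))
        · exact w62 (hWij (Ee 4))
        · exact w46 (hWij (Ee 2))
        · exact w64 (hWij (Ee 2))
      rcases classify6 i j hij hi0 hj0 hDP hTP with h | h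
      · exact ⟨(i, j), Finset.mem_coe.mpr h, hPs.symm⟩
      · refine ⟨(j, i), Finset.mem_coe.mpr h, ?_⟩
        simp only
        rw [Set.pair_comm (Ee j) (Ee i)]
        exact hPs.symm
    · rintro ⟨p, hp, rfl⟩
      simp only [Finset.mem_coe] at hp
      fin_cases hp
      · exact ⟨rank_pair (by decide),
          iso_span (by simp [polarB, Ee, Pi.single_apply])
            (by simp [polarB, Ee, Pi.single_apply])
            (by simp [polarB, Ee, Pi.single_apply])
            (by simp [polarB, Ee, Pi.single_apply]),
          null_span n14, inv_span d _ _⟩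
      · exact ⟨rank_pair (by decide),
          iso_span (by simp [polarB, Ee, Pi.single_apply])
            (by simp [polarB, Ee, Pi.single_apply])
            (by simp [polarB, Ee, Pi.single_apply])
            (by simp [polarB, Ee, Pi.single_apply]),
          null_span n16, inv_span d _ _⟩
      · exact ⟨rank_pair (by decide),
          iso_span (by simp [polarB, Ee, Pi.single_apply])
            (by simp [polarB, Ee, Pi.single_apply])
            (by simp [polarB, Ee, Pi.single_apply])
            (by simp [polarB, Ee, Pi.single_apply]),
          null_span n23, inv_span d _ _⟩
      · exact ⟨rank_pair (by decide),
          iso_span (by simp [polarB, Ee, Pi.single_apply])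
            (by simp [polarB, Ee, Pi.single_apply])
            (by simp [polarB, Ee, Pi.single_apply])
            (by simp [polarB, Ee, Pi.single_apply]),
          null_span n25, inv_span d _ _⟩
      · exact ⟨rank_pair (by decide),
          iso_span (by simp [polarB, Ee, Pi.single_apply])
            (by simp [polarB, Ee, Pi.single_apply])
            (by simp [polarB, Ee, Pi.single_apply])
            (by simp [polarB, Ee, Pi.single_apply]),
          null_span n36, inv_span d _ _⟩
      · exact ⟨rank_pair (by decide),
          iso_span (by simp [polarB, Ee, Pi.single_apply])
            (by simp [polarB, Ee, Pi.single_apply])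
            (by simp [polarB, Ee, Pi.single_apply])
            (by simp [polarB, Ee, Pi.single_apply]),
          null_span n45, inv_span d _ _⟩
  rw [hset, Set.ncard_image_of_injOn (injOn_pairs T6 T6_lt), Set.ncard_coe_finset]
  decide

/-- For the diagonal endomorphism `D = diag(0, s, −s, t, −t, −(s+t), s+t)` with
`s, t, s+t, s−t, 2s+t, s+2t` all nonzero, there are exactly `12` isotropic planes
`P ⊂ ℂ⁷` with `D(P) ⊆ P`, and exactly `6` of them are null-planes. -/
theorem stmt_17 (s t : ℂ) (hs : s ≠ 0) (ht : t ≠ 0) (hst : s + t ≠ 0)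
    (hst' : s - t ≠ 0) (h2st : 2 * s + t ≠ 0) (hs2t : s + 2 * t ≠ 0) :
    let d : Fin 7 → ℂ := ![0, s, -s, t, -t, -(s + t), s + t]
    {P : Submodule ℂ (Fin 7 → ℂ) | Module.finrank ℂ P = 2 ∧
      (∀ u ∈ P, ∀ v ∈ P, polarB u v = 0) ∧
      (∀ u ∈ P, (fun i => d i * u i) ∈ P)}.ncard = 12 ∧
    {P : Submodule ℂ (Fin 7 → ℂ) | Module.finrank ℂ P = 2 ∧
      (∀ u ∈ P, ∀ v ∈ P, polarB u v = 0) ∧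
      (∀ u ∈ P, ∀ v ∈ P, ∀ z : Fin 7 → ℂ, omega7 u v z = 0) ∧
      (∀ u ∈ P, (fun i => d i * u i) ∈ P)}.ncard = 6 := by
  intro d
  exact ⟨part1 s t hs ht hst hst' h2st hs2t, part2 s t hs ht hst hst' h2st hs2t⟩
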